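/- Let k be an even divisor of 2n with k ∤ n, so k = 2p with p ∣ n and n/p odd, say n = p(2l+1). Then ⟨t^k⟩ ≅ ℤ_{2l+1} is a normal subgroup of the binary dihedral group 2D_{2n}, and the quotient 2D_{2n}/⟨t^k⟩ is isomorphic to the binary dihedral group 2D_{2p} of order 4p (interpreting 2D_2 ≅ ℤ₄). -/

import Mathlib

lemma isCyclic_zpowers' {G : Type*} [Group G] (g : G) : IsCyclic (Subgroup.zpowers g) := by
  refine ⟨⟨g, Subgroup.mem_zpowers g⟩, ?_⟩
  rintro ⟨x, hx⟩
  obtain ⟨m, rfl⟩ := Subgroup.mem_zpowers_iff.mp hx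
  exact ⟨m, by ext; simp⟩

theorem binaryDihedral_quotient_binaryDihedral (n p l k : ℕ)
    (hp : 0 < p) (hn : n = p * (2 * l + 1)) (hk : k = 2 * p) :
    let N : Subgroup (QuaternionGroup n) :=
      Subgroup.zpowers ((QuaternionGroup.a 1) ^ k)
    N.Normal ∧
    Nonempty (N ≃* Multiplicative (ZMod (2 * l + 1))) ∧
    ∃ ψ : QuaternionGroup n →* QuaternionGroup p,
      Function.Surjective ψ ∧ ψ.ker = N := by
  subst hn hk
  intro N
  have hn0 : 0 < p * (2 * l + 1) := Nat.mul_pos hp (by omega)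
  haveI : NeZero (p * (2 * l + 1)) := ⟨hn0.ne'⟩
  haveI : NeZero p := ⟨hp.ne'⟩
  haveI : NeZero (2 * p) := ⟨by omega⟩
  have hdvd : 2 * p ∣ 2 * (p * (2 * l + 1)) := ⟨2 * l + 1, by ring⟩
  set c : ZMod (2 * (p * (2 * l + 1))) →+* ZMod (2 * p) := ZMod.castHom hdvd _ with hc
  have hnp : c ((p * (2 * l + 1) : ℕ) : ZMod (2 * (p * (2 * l + 1)))) = (p : ZMod (2 * p)) := by
    rw [map_natCast]
    rw [show (p * (2 * l + 1) : ℕ) = p + 2 * p * l by ring]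
    have : ((p + 2 * p * l : ℕ) : ZMod (2 * p))
        = (p : ZMod (2 * p)) + ((2 * p : ℕ) : ZMod (2 * p)) * l := by push_cast; ring
    rw [this, ZMod.natCast_self, zero_mul, add_zero]
  let f : QuaternionGroup (p * (2 * l + 1)) → QuaternionGroup p := fun x =>
    match x with
    | QuaternionGroup.a i => QuaternionGroup.a (c i)
    | QuaternionGroup.xa i => QuaternionGroup.xa (c i)
  have hf : ∀ x y, f (x * y) = f x * f y := by
    rintro (i | i) (j | j) <;>
      simp only [f, QuaternionGroup.a_mul_a, QuaternionGroup.a_mul_xa,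
        QuaternionGroup.xa_mul_a, QuaternionGroup.xa_mul_xa, map_add, map_sub, hnp]
  let ψ : QuaternionGroup (p * (2 * l + 1)) →* QuaternionGroup p := MonoidHom.mk' f hf
  have hcast : ∀ i : ZMod (2 * (p * (2 * l + 1))), (c i = 0 ↔ (2 * p : ℕ) ∣ i.val) := by
    intro i
    rw [hc, ZMod.castHom_apply, ← ZMod.natCast_val, ZMod.natCast_eq_zero_iff]
  have hmemN : ∀ i, (QuaternionGroup.a i ∈ N ↔ (2 * p : ℕ) ∣ i.val) := by
    intro i
    rw [show N = Subgroup.zpowers ((QuaternionGroup.a 1) ^ (2 * p)) from rfl,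
      ← mem_powers_iff_mem_zpowers, Submonoid.mem_powers_iff]
    constructor
    · rintro ⟨m, hm⟩
      rw [← pow_mul, QuaternionGroup.a_one_pow] at hm
      injection hm with h
      have : c i = 0 := by
        rw [← h, map_natCast,
          show ((2 * p * m : ℕ) : ZMod (2 * p)) = ((2 * p : ℕ) : ZMod (2 * p)) * m by
            push_cast; ring,
          ZMod.natCast_self, zero_mul]
      exact (hcast i).mp this
    · rintro ⟨m, hm⟩
      refine ⟨m, ?_⟩
      rw [← pow_mul, QuaternionGroup.a_one_pow]
      congr 1
      rw [show (2 * p * m : ℕ) = i.val from hm.symm]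
      simp [ZMod.natCast_val, ZMod.cast_id]
  have hxaN : ∀ i, QuaternionGroup.xa i ∉ N := by
    intro i hi
    rw [show N = Subgroup.zpowers ((QuaternionGroup.a 1) ^ (2 * p)) from rfl,
      ← mem_powers_iff_mem_zpowers, Submonoid.mem_powers_iff] at hi
    obtain ⟨m, hm⟩ := hi
    rw [← pow_mul, QuaternionGroup.a_one_pow] at hm
    exact absurd hm (by simp)
  have hker : ψ.ker = N := by
    ext x
    rcases x with i | i
    · rw [MonoidHom.mem_ker, hmemN]
      show QuaternionGroup.a (c i) = 1 ↔ _
      rw [QuaternionGroup.one_def]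
      constructor
      · intro h
        injection h with h
        exact (hcast i).mp h
      · intro h
        rw [(hcast i).mpr h]
    · constructor
      · intro h
        rw [MonoidHom.mem_ker] at h
        exact absurd h (by simp [ψ, f, QuaternionGroup.one_def, -QuaternionGroup.a_zero])
      · intro h
        exact absurd h (hxaN i)
  have hsurj : Function.Surjective ψ := by
    rintro (j | j)
    · refine ⟨QuaternionGroup.a ((j.val : ℕ) : ZMod (2 * (p * (2 * l + 1)))), ?_⟩
      show QuaternionGroup.a (c _) = _
      rw [map_natCast]
      simp [ZMod.natCast_val, ZMod.cast_id]
    · refine ⟨QuaternionGroup.xa ((j.val : ℕ) : ZMod (2 * (p * (2 * l + 1)))), ?_⟩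
      show QuaternionGroup.xa (c _) = _
      rw [map_natCast]
      simp [ZMod.natCast_val, ZMod.cast_id]
  refine ⟨hker ▸ ψ.normal_ker, ?_, ψ, hsurj, hker⟩
  have horder : orderOf ((QuaternionGroup.a 1 : QuaternionGroup (p * (2 * l + 1))) ^ (2 * p))
      = 2 * l + 1 := by
    rw [orderOf_pow, QuaternionGroup.orderOf_a_one]
    have hg : Nat.gcd (2 * (p * (2 * l + 1))) (2 * p) = 2 * p :=
      Nat.gcd_eq_right hdvd
    rw [hg, show 2 * (p * (2 * l + 1)) = (2 * p) * (2 * l + 1) by ring,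
      Nat.mul_div_cancel_left _ (by omega)]
  haveI hcy : IsCyclic N := isCyclic_zpowers' _
  have hcard : Nat.card N = 2 * l + 1 := by
    rw [show N = Subgroup.zpowers ((QuaternionGroup.a 1) ^ (2 * p)) from rfl,
      Nat.card_zpowers, horder]
  have e := zmodCyclicMulEquiv hcy
  rw [hcard] at e
  exact ⟨e.symm⟩
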